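/- Gradient step progress for a directional estimate: let f: R^n → R be convex with L_2-Lipschitz gradient (w.r.t. the Euclidean norm), let e be a unit vector, let g̃ in R^n be any vector collinear with e, and set y = x - (1/(2 L_2)) g̃. Then f(y) <= f(x) + ⟨g̃, y - x⟩ + L_2 ‖y - x‖_2^2 + (1/(2 L_2))·‖⟨∇f(x), e⟩ e - g̃‖_2^2, and consequently (1/(4 L_2))‖g̃‖_2^2 <= f(x) - f(y) + (1/(2 L_2))‖⟨∇f(x), e⟩ e - g̃‖_2^2. -/

import Mathlib

open RealInnerProductSpace

lemma descent_lemma {n : ℕ} (f : EuclideanSpace ℝ (Fin n) → ℝ)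
    (f' : EuclideanSpace ℝ (Fin n) → EuclideanSpace ℝ (Fin n))
    (hgrad : ∀ x, HasGradientAt f (f' x) x)
    (L : ℝ) (hL : 0 ≤ L)
    (hlip : ∀ x y, ‖f' x - f' y‖ ≤ L * ‖x - y‖)
    (x y : EuclideanSpace ℝ (Fin n)) :
    f y ≤ f x + ⟪f' x, y - x⟫ + L / 2 * ‖y - x‖ ^ 2 := by
  set v := y - x with hv
  have hcontf' : Continuous f' := by
    have : LipschitzWith (Real.toNNReal L) f' := by
      apply LipschitzWith.of_dist_le_mul
      intro a b
      rw [dist_eq_norm, dist_eq_norm]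
      simpa [Real.coe_toNNReal L hL] using hlip a b
    exact this.continuous
  have hline : ∀ t : ℝ, HasDerivAt (fun t : ℝ => f (x + t • v)) ⟪f' (x + t • v), v⟫ t := by
    intro t
    have h1 : HasDerivAt (fun t : ℝ => x + t • v) v t := by
      simpa using ((hasDerivAt_id t).smul_const v).const_add x
    have h2 := (hgrad (x + t • v)).hasFDerivAt.comp_hasDerivAt t h1
    simpa [InnerProductSpace.toDual_apply_apply, Function.comp_def] using h2
  have hcont : Continuous fun t : ℝ => ⟪f' (x + t • v), v⟫ := by
    exact (hcontf'.comp (continuous_const.add (continuous_id.smul continuous_const))).inner continuous_const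
  have key : f (x + (1:ℝ) • v) - f (x + (0:ℝ) • v) = ∫ t in (0:ℝ)..1, ⟪f' (x + t • v), v⟫ := by
    exact (intervalIntegral.integral_eq_sub_of_hasDerivAt (fun t _ => hline t)
      (hcont.intervalIntegrable 0 1)).symm
  have hbd : ∀ t ∈ Set.Icc (0:ℝ) 1,
      ⟪f' (x + t • v), v⟫ ≤ ⟪f' x, v⟫ + L * t * ‖v‖ ^ 2 := by
    intro t ht
    have h1 : ⟪f' (x + t • v) - f' x, v⟫ ≤ ‖f' (x + t • v) - f' x‖ * ‖v‖ :=
      real_inner_le_norm _ _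
    have h2 : ‖f' (x + t • v) - f' x‖ ≤ L * (t * ‖v‖) := by
      have := hlip (x + t • v) x
      simpa [norm_smul, abs_of_nonneg ht.1] using this
    have h3 : ‖f' (x + t • v) - f' x‖ * ‖v‖ ≤ L * (t * ‖v‖) * ‖v‖ :=
      mul_le_mul_of_nonneg_right h2 (norm_nonneg _)
    have h4 : ⟪f' (x + t • v) - f' x, v⟫ = ⟪f' (x + t • v), v⟫ - ⟪f' x, v⟫ :=
      inner_sub_left _ _ _
    nlinarith [norm_nonneg v]
  have hint : (∫ t in (0:ℝ)..1, ⟪f' (x + t • v), v⟫) ≤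
      ∫ t in (0:ℝ)..1, (⟪f' x, v⟫ + L * t * ‖v‖ ^ 2) := by
    apply intervalIntegral.integral_mono_on (by norm_num) (hcont.intervalIntegrable 0 1)
    · exact (Continuous.intervalIntegrable (continuous_const.add ((continuous_const.mul continuous_id).mul continuous_const)) 0 1)
    · exact hbd
  have hval : (∫ t in (0:ℝ)..1, (⟪f' x, v⟫ + L * t * ‖v‖ ^ 2)) = ⟪f' x, v⟫ + L / 2 * ‖v‖ ^ 2 := by
    have : (∫ t in (0:ℝ)..1, (⟪f' x, v⟫ + L * t * ‖v‖ ^ 2))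
        = (∫ t in (0:ℝ)..1, ⟪f' x, v⟫) + ∫ t in (0:ℝ)..1, L * t * ‖v‖ ^ 2 := by
      apply intervalIntegral.integral_add
      · exact intervalIntegrable_const
      · exact Continuous.intervalIntegrable ((continuous_const.mul continuous_id).mul continuous_const) 0 1
    rw [this]
    have h2 : (∫ t in (0:ℝ)..1, L * t * ‖v‖ ^ 2) = L / 2 * ‖v‖ ^ 2 := by
      have : (∫ t in (0:ℝ)..1, L * t * ‖v‖ ^ 2) = (L * ‖v‖^2) * ∫ t in (0:ℝ)..1, t := by
        rw [← intervalIntegral.integral_const_mul]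
        congr 1; ext t; ring
      rw [this, integral_id]; ring
    simp [h2]
  have hy' : x + (1:ℝ) • v = y := by simp [hv]
  have hx' : x + (0:ℝ) • v = x := by simp
  rw [hy', hx'] at key
  linarith [key, hint, hval]



/-- Gradient step progress for a directional estimate: `f` is convex with `L₂`-Lipschitz
gradient `f'`, `e` is a unit vector, `g̃ = c • e`, and `y = x - g̃/(2 L₂)`. -/
theorem gradient_step_progress (n : ℕ)
    (f : EuclideanSpace ℝ (Fin n) → ℝ)
    (f' : EuclideanSpace ℝ (Fin n) → EuclideanSpace ℝ (Fin n))
    (hgrad : ∀ x, HasGradientAt f (f' x) x)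
    (hconv : ConvexOn ℝ Set.univ f)
    (L : ℝ) (hL : 0 < L)
    (hlip : ∀ x y, ‖f' x - f' y‖ ≤ L * ‖x - y‖)
    (e : EuclideanSpace ℝ (Fin n)) (he : ‖e‖ = 1)
    (c : ℝ) (gt : EuclideanSpace ℝ (Fin n)) (hgt : gt = c • e)
    (x y : EuclideanSpace ℝ (Fin n)) (hy : y = x - (1 / (2 * L)) • gt) :
    f y ≤ f x + (inner ℝ gt (y - x) : ℝ) + L * ‖y - x‖ ^ 2 +
        1 / (2 * L) * ‖((inner ℝ (f' x) e : ℝ)) • e - gt‖ ^ 2 ∧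
      1 / (4 * L) * ‖gt‖ ^ 2 ≤ f x - f y +
        1 / (2 * L) * ‖((inner ℝ (f' x) e : ℝ)) • e - gt‖ ^ 2 := by
    open RealInnerProductSpace in
  have hyx : y - x = (-(1 / (2 * L))) • gt := by
    rw [hy]; rw [neg_smul]; abel
  have hee : (⟪e, e⟫ : ℝ) = 1 := by
    rw [real_inner_self_eq_norm_sq, he]; norm_num
  set Δ : EuclideanSpace ℝ (Fin n) := ((inner ℝ (f' x) e : ℝ)) • e - gt with hΔ
  have hcol : (⟪f' x, y - x⟫ : ℝ) = ⟪((inner ℝ (f' x) e : ℝ)) • e, y - x⟫ := by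
    rw [hyx, hgt, smul_smul]
    rw [real_inner_smul_right, real_inner_smul_right, real_inner_smul_left, hee]
    ring
  have hsplit : (⟪f' x, y - x⟫ : ℝ) = ⟪gt, y - x⟫ + ⟪Δ, y - x⟫ := by
    rw [hΔ, inner_sub_left, hcol]; ring
  have hcs : (⟪Δ, y - x⟫ : ℝ) ≤ ‖Δ‖ * ‖y - x‖ := real_inner_le_norm _ _
  have hyoung : ‖Δ‖ * ‖y - x‖ ≤ L / 2 * ‖y - x‖ ^ 2 + 1 / (2 * L) * ‖Δ‖ ^ 2 := by
    have hkey : L / 2 * ‖y - x‖ ^ 2 + 1 / (2 * L) * ‖Δ‖ ^ 2 - ‖Δ‖ * ‖y - x‖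
        = (L * ‖y - x‖ - ‖Δ‖) ^ 2 / (2 * L) := by
      field_simp; ring
    nlinarith [div_nonneg (sq_nonneg (L * ‖y - x‖ - ‖Δ‖)) (by positivity : (0:ℝ) ≤ 2 * L)]
  have hdesc := descent_lemma f f' hgrad L hL.le hlip x y
  have hfirst : f y ≤ f x + (inner ℝ gt (y - x) : ℝ) + L * ‖y - x‖ ^ 2 +
      1 / (2 * L) * ‖((inner ℝ (f' x) e : ℝ)) • e - gt‖ ^ 2 := by
    rw [← hΔ]; nlinarith
  refine ⟨hfirst, ?_⟩
  have h1 : (inner ℝ gt (y - x) : ℝ) = -(1 / (2 * L)) * ‖gt‖ ^ 2 := by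
    rw [hyx, real_inner_smul_right, real_inner_self_eq_norm_sq]
  have h2 : ‖y - x‖ ^ 2 = (1 / (2 * L)) ^ 2 * ‖gt‖ ^ 2 := by
    rw [hyx, norm_smul]
    rw [Real.norm_eq_abs, abs_neg, abs_of_nonneg (by positivity)]
    ring
  have h3 : L * ((1 / (2 * L)) ^ 2 * ‖gt‖ ^ 2) = 1 / (4 * L) * ‖gt‖ ^ 2 := by
    field_simp; ring
  have h4 : -(1 / (2 * L)) * ‖gt‖ ^ 2 + 1 / (4 * L) * ‖gt‖ ^ 2 = -(1 / (4 * L)) * ‖gt‖ ^ 2 := by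
    field_simp; ring
  rw [h1, h2, h3] at hfirst
  linarith
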